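/- Let w₁,…,w_n be nonzero integers, exactly d of which are odd, and let C_n = (w₁K₂) □ (w₂K₂) □ ⋯ □ (w_nK₂) be the weighted hypercube (Cartesian product of weighted edges). Then for each vertex u ∈ {0,1}^n there is a vertex v at Hamming distance d from u such that C_n has perfect state transfer from u to v at time π/2. Concretely, v = u + s where s ∈ {0,1}^n is the indicator vector of the odd weights. -/

import Mathlib

open Matrix
open scoped Classical

/-- Perfect state transfer at time π/2 for a real Hamiltonian `L`. -/
noncomputable def pstHalfPi {m : Type*} [Fintype m] [DecidableEq m]
    (L : Matrix m m ℝ) (j k : m) : Prop :=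
  ‖(NormedSpace.exp ((Complex.I * ((Real.pi / 2 : ℝ) : ℂ)) •
        L.map (fun x => (x : ℂ)))) j k‖ = 1

/-- The factor of the weighted hypercube Laplacian acting on coordinate `j`:
`I ⊗ ⋯ ⊗ L(K₂) ⊗ ⋯ ⊗ I` where `L(K₂) = [[1,-1],[-1,1]]`. -/
noncomputable def edgeFactor (n : ℕ) (j : Fin n) :
    Matrix (Fin n → ZMod 2) (Fin n → ZMod 2) ℝ :=
  Matrix.of fun u v =>
    if u = v then 1 else if v = Function.update u j (u j + 1) then -1 else 0

namespace WHPST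

/-- Translation matrix on `(ZMod 2)^n`. -/
noncomputable def T (n : ℕ) (s : Fin n → ZMod 2) :
    Matrix (Fin n → ZMod 2) (Fin n → ZMod 2) ℂ :=
  Matrix.of fun u v => if v = u + s then 1 else 0

lemma T_apply (n : ℕ) (s u v : Fin n → ZMod 2) :
    T n s u v = if v = u + s then 1 else 0 := rfl

lemma T_zero (n : ℕ) : T n 0 = 1 := by
  ext u v
  simp [T_apply, Matrix.one_apply, eq_comm]

lemma T_mul (n : ℕ) (s t : Fin n → ZMod 2) : T n s * T n t = T n (s + t) := by
  ext u v
  rw [Matrix.mul_apply]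
  simp only [T_apply]
  rw [Finset.sum_eq_single (u + s)]
  · simp [add_assoc]
  · intro x _ hx
    simp [hx]
  · simp

lemma T_commute (n : ℕ) (s t : Fin n → ZMod 2) : Commute (T n s) (T n t) := by
  unfold Commute SemiconjBy
  rw [T_mul, T_mul, add_comm]

lemma noncommProd_T {n : ℕ} {ι : Type*} (s : Finset ι) (f : ι → (Fin n → ZMod 2)) :
    ∀ comm, s.noncommProd (fun j => T n (f j)) comm = T n (∑ j ∈ s, f j) := by
  induction s using Finset.cons_induction with
  | empty => intro comm; simp [T_zero]
  | cons a s ha ih =>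
      intro comm
      rw [Finset.noncommProd_cons, ih, Finset.sum_cons, T_mul]

open NormedSpace in
/-- Exponential of a scalar multiple of an element `A` with `A * A = 2 • A`. -/
lemma exp_smul_double_idem {𝔸 : Type*} [NormedRing 𝔸] [NormedAlgebra ℂ 𝔸] [CompleteSpace 𝔸]
    (A : 𝔸) (hA : A * A = (2 : ℂ) • A) (c : ℂ) :
    exp (c • A) = 1 + ((Complex.exp (2 * c) - 1) / 2) • A := by
  have hApow : ∀ k : ℕ, A ^ (k + 1) = (2 : ℂ) ^ k • A := by
    intro k
    induction k with
    | zero => simp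
    | succ k ih =>
        rw [pow_succ, ih, Algebra.smul_mul_assoc, hA, smul_smul, ← pow_succ]
  have hsum := expSeries_summable' (𝕂 := ℂ) (c • A)
  rw [exp_eq_tsum ℂ]
  simp only []
  rw [hsum.tsum_eq_zero_add]
  have h1 : ((Nat.factorial 0 : ℂ)⁻¹) • (c • A) ^ 0 = 1 := by simp
  have h2 : ∀ k : ℕ, ((Nat.factorial (k + 1) : ℂ)⁻¹) • (c • A) ^ (k + 1)
      = (((2 * c) ^ (k + 1) / (Nat.factorial (k + 1) : ℂ)) / 2) • A := by
    intro k
    rw [smul_pow, hApow, smul_smul, smul_smul]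
    congr 1
    rw [mul_pow]
    field_simp
    ring
  rw [h1]
  simp only [h2]
  have hsum2 : Summable fun k : ℕ => ((2 * c) ^ (k + 1) / (Nat.factorial (k + 1) : ℂ)) / 2 := by
    have := (expSeries_div_summable (2 * c)).comp_injective Nat.succ_injective
    exact this.div_const 2
  rw [hsum2.tsum_smul_const]
  congr 1
  have hexp : Complex.exp (2 * c) =
      (2 * c) ^ 0 / (Nat.factorial 0 : ℂ) +
        ∑' k : ℕ, (2 * c) ^ (k + 1) / (Nat.factorial (k + 1) : ℂ) := by
    rw [Complex.exp_eq_exp_ℂ, exp_eq_tsum_div]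
    exact (expSeries_div_summable (2 * c)).tsum_eq_zero_add
  rw [tsum_div_const, hexp]
  have h0 : (2 * c) ^ 0 / (Nat.factorial 0 : ℂ) = 1 := by norm_num
  rw [h0]
  congr 1
  ring

lemma matrix_exp_smul_double_idem {m : Type*} [Fintype m] [DecidableEq m]
    (A : Matrix m m ℂ) (hA : A * A = (2 : ℂ) • A) (c : ℂ) :
    NormedSpace.exp (c • A) = 1 + ((Complex.exp (2 * c) - 1) / 2) • A := by
  letI : SeminormedRing (Matrix m m ℂ) := Matrix.linftyOpSemiNormedRing
  letI : NormedRing (Matrix m m ℂ) := Matrix.linftyOpNormedRing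
  letI : NormedAlgebra ℂ (Matrix m m ℂ) := Matrix.linftyOpNormedAlgebra
  exact exp_smul_double_idem A hA c

end WHPST

open WHPST

theorem weighted_hypercube_pst (n : ℕ) (w : Fin n → ℤ) (hw : ∀ j, w j ≠ 0)
    (d : ℕ) (hd : d = (Finset.univ.filter fun j => Odd (w j)).card)
    (L : Matrix (Fin n → ZMod 2) (Fin n → ZMod 2) ℝ)
    (hL : L = ∑ j, (w j : ℝ) • edgeFactor n j) :
    ∀ u : Fin n → ZMod 2, ∃ v : Fin n → ZMod 2,
      (Finset.univ.filter fun i => v i ≠ u i).card = d ∧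
      v = u + (fun i => if Odd (w i) then (1 : ZMod 2) else 0) ∧
      pstHalfPi L u v := by
  intro u
  classical
  set s : Fin n → ZMod 2 := fun i => if Odd (w i) then (1 : ZMod 2) else 0 with hs
  refine ⟨u + s, ?_, rfl, ?_⟩
  · rw [hd]
    congr 1
    ext i
    simp only [Finset.mem_filter, Finset.mem_univ, true_and, Pi.add_apply, ne_eq]
    rw [add_eq_left]
    by_cases h : Odd (w i) <;> simp [hs, h]
  · -- PST
    set e : Fin n → (Fin n → ZMod 2) := fun j i => if i = j then 1 else 0 with he
    have hupdate : ∀ j (x : Fin n → ZMod 2),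
        Function.update x j (x j + 1) = x + e j := by
      intro j x
      funext i
      by_cases hij : i = j
      · subst hij; simp [Function.update_apply, he]
      · simp [Function.update_apply, hij, he]
    have hne : ∀ j (x : Fin n → ZMod 2), x ≠ x + e j := by
      intro j x h
      have := congrFun h j
      simp [he] at this
    have hef : ∀ j, (edgeFactor n j).map (fun x => (x : ℂ)) = 1 - T n (e j) := by
      intro j
      ext a b
      simp only [Matrix.map_apply, edgeFactor, Matrix.of_apply, Matrix.sub_apply,
        Matrix.one_apply, T_apply, hupdate]
      have hej0 : e j ≠ 0 := by
        intro h
        have := congrFun h j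
        simp [he] at this
      by_cases h1 : a = b
      · subst h1
        simp [hne j a]
      · by_cases h2 : b = a + e j <;> simp [h1, h2, hej0]
    have hkey : (Complex.I * ((Real.pi / 2 : ℝ) : ℂ)) • L.map (fun x => (x : ℂ))
        = ∑ j, (Complex.I * ((Real.pi / 2 : ℝ) : ℂ) * (w j : ℂ)) • (1 - T n (e j)) := by
      have hmap : L.map (fun x => (x : ℂ)) = ∑ j, (w j : ℂ) • (1 - T n (e j)) := by
        rw [hL]
        ext a b
        simp only [Matrix.map_apply, Matrix.sum_apply, Matrix.smul_apply, smul_eq_mul]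
        push_cast
        refine Finset.sum_congr rfl fun j _ => ?_
        have := congrFun (congrFun (hef j) a) b
        rw [Matrix.map_apply] at this
        rw [this]
      rw [hmap, Finset.smul_sum]
      refine Finset.sum_congr rfl fun j _ => ?_
      rw [smul_smul]
    have hTT : ∀ j, T n (e j) * T n (e j) = 1 := by
      intro j
      rw [T_mul]
      have : e j + e j = 0 := by
        funext i
        by_cases hij : i = j
        · simp only [Pi.add_apply, Pi.zero_apply, he, if_pos hij]
          decide
        · simp [he, hij]
      rw [this, T_zero]
    have hA : ∀ j, (1 - T n (e j)) * (1 - T n (e j)) = (2 : ℂ) • (1 - T n (e j)) := by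
      intro j
      rw [sub_mul, mul_sub, mul_sub, hTT j, two_smul]
      simp only [one_mul, mul_one]
      abel
    have hfac : ∀ j, NormedSpace.exp
        ((Complex.I * ((Real.pi / 2 : ℝ) : ℂ) * (w j : ℂ)) • (1 - T n (e j)))
        = T n (if Odd (w j) then e j else 0) := by
      intro j
      rw [matrix_exp_smul_double_idem _ (hA j)]
      have h2c : Complex.exp (2 * (Complex.I * ((Real.pi / 2 : ℝ) : ℂ) * (w j : ℂ)))
          = (-1 : ℂ) ^ (w j) := by
        have harg : 2 * (Complex.I * ((Real.pi / 2 : ℝ) : ℂ) * (w j : ℂ))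
            = (w j : ℂ) * ((Real.pi : ℂ) * Complex.I) := by
          push_cast
          ring
        rw [harg, Complex.exp_int_mul, Complex.exp_pi_mul_I]
      rw [h2c]
      by_cases hodd : Odd (w j)
      · rw [if_pos hodd, hodd.neg_one_zpow]
        have hc : ((-1 : ℂ) - 1) / 2 = -1 := by norm_num
        rw [hc, neg_one_smul]
        abel
      · rw [if_neg hodd, (Int.not_odd_iff_even.mp hodd).neg_one_zpow]
        simp [T_zero]
    have hcomm : ((Finset.univ : Finset (Fin n)) : Set (Fin n)).Pairwise
        (Function.onFun Commute fun j =>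
          (Complex.I * ((Real.pi / 2 : ℝ) : ℂ) * (w j : ℂ)) • (1 - T n (e j))) := by
      intro a _ b _ _
      apply Commute.smul_left
      apply Commute.smul_right
      exact (Commute.one_left _).sub_left
        ((Commute.one_right _).sub_right (T_commute n (e a) (e b)))
    have hsum_s : (∑ j, if Odd (w j) then e j else 0) = s := by
      funext i
      rw [Finset.sum_apply]
      have hterm : ∀ j, (if Odd (w j) then e j else 0) i
          = if i = j then (if Odd (w j) then (1 : ZMod 2) else 0) else 0 := by
        intro j
        by_cases h : Odd (w j) <;> by_cases hij : i = j <;> simp [he, h, hij]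
      simp_rw [hterm]
      rw [Finset.sum_ite_eq]
      simp [hs]
    unfold pstHalfPi
    rw [hkey, Matrix.exp_sum_of_commute Finset.univ _ hcomm]
    erw [Finset.noncommProd_congr rfl (fun j _ => hfac j)]
    erw [noncommProd_T, hsum_s]
    rw [T_apply, if_pos rfl]
    simp
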